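/- Let (G, τ) be a Hausdorff Abelian paratopological group. If G is locally countable (i.e., the identity has a countable open neighborhood), then G is submetrizable. -/

import Mathlib

open Topology Filter Set Pointwise

/-- A first-countable Hausdorff-separated topological (comm) group is metrizable. -/
lemma metrizable_aux {G : Type*} [CommGroup G] [t' : TopologicalSpace G] [IsTopologicalGroup G]
    (W : ℕ → Set G) (hbasis : (𝓝 (1 : G)).HasBasis (fun _ : ℕ => True) W)
    (hsep : ∀ g : G, (∀ n, g ∈ W n) → g = 1) :
    TopologicalSpace.MetrizableSpace G := by
  haveI : (𝓝 (1 : G)).IsCountablyGenerated := hbasis.isCountablyGenerated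
  haveI ht1 : T1Space G := by
    constructor
    intro y
    rw [← isOpen_compl_iff, isOpen_iff_mem_nhds]
    intro x hx
    have hxy : x⁻¹ * y ≠ 1 := by
      simp only [Ne, inv_mul_eq_one]
      exact fun h => hx (by simp [h])
    obtain ⟨n, hn⟩ : ∃ n, x⁻¹ * y ∉ W n := by
      by_contra h
      push_neg at h
      exact hxy (hsep _ h)
    have hmem : (fun z => x⁻¹ * z) ⁻¹' (W n) ∈ 𝓝 x := by
      apply ContinuousAt.preimage_mem_nhds ((continuous_const.mul continuous_id).continuousAt)
      simpa using hbasis.mem_of_mem (i := n) trivial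
    refine mem_of_superset hmem fun z hz hzy => ?_
    apply hn
    simp only [Set.mem_singleton_iff] at hzy
    rwa [hzy] at hz
  letI : UniformSpace G := IsTopologicalGroup.rightUniformSpace G
  haveI : (uniformity G).IsCountablyGenerated := by
    rw [uniformity_eq_comap_nhds_one']
    exact Filter.comap.isCountablyGenerated _ _
  exact UniformSpace.metrizableSpace

/-- Let `(G, τ)` be a Hausdorff Abelian paratopological group. If `G` is locally
countable (the identity has a countable open neighborhood), then `G` is submetrizable:
there is a metrizable topology on `G` coarser than `τ`. -/
theorem hausdorff_abelian_locallyCountable_paratopological_group_submetrizable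
    {G : Type*} [CommGroup G] [t : TopologicalSpace G] [T2Space G] [ContinuousMul G]
    (hloc : ∃ U : Set G, IsOpen U ∧ (1 : G) ∈ U ∧ U.Countable) :
    ∃ t' : TopologicalSpace G, t ≤ t' ∧ @TopologicalSpace.MetrizableSpace G t' := by
  classical
  obtain ⟨U, hUo, hU1, hUc⟩ := hloc
  set H : Subgroup G := Subgroup.closure U with hHdef
  have hUH : U ⊆ (H : Set G) := Subgroup.subset_closure
  have hHopen : IsOpen (H : Set G) :=
    H.isOpen_of_mem_nhds (Filter.mem_of_superset (hUo.mem_nhds hU1) hUH)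
  -- countability of H
  have hHc : (H : Set G).Countable := by
    have hS : (U ∪ U⁻¹).Countable := hUc.union (by simpa using hUc.image (fun x => x⁻¹))
    haveI : Countable ↥(U ∪ U⁻¹) := hS.to_subtype
    have hsub : (H : Set G) ⊆
        Set.range (fun l : List ↥(U ∪ U⁻¹) => (l.map Subtype.val).prod) := by
      intro g hg
      refine Subgroup.closure_induction (k := U)
        (p := fun x _ => x ∈ Set.range
          (fun l : List ↥(U ∪ U⁻¹) => (l.map Subtype.val).prod)) ?_ ?_ ?_ ?_ hg
      · intro x hx
        exact ⟨[⟨x, Or.inl hx⟩], by simp⟩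
      · exact ⟨[], by simp⟩
      · rintro x y hx hy ⟨l, rfl⟩ ⟨l', rfl⟩
        exact ⟨l ++ l', by simp⟩
      · rintro x hx ⟨l, rfl⟩
        refine ⟨l.map (fun a : ↥(U ∪ U⁻¹) => (⟨(a : G)⁻¹, by
          rcases a.2 with h | h
          · exact Or.inr (by simpa using h)
          · exact Or.inl (by simpa using h)⟩ : ↥(U ∪ U⁻¹))), ?_⟩
        simp only [List.map_map, List.prod_inv, Function.comp_def]
    exact (Set.countable_range _).mono hsub
  obtain ⟨e, he⟩ := hHc.exists_eq_range ⟨1, H.one_mem⟩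
  -- separating neighborhoods
  have hsepT : ∀ g : G, ∃ T : Set G, IsOpen T ∧ (1 : G) ∈ T ∧ T ⊆ (H : Set G) ∧
      (g ∈ (H : Set G) → g ≠ 1 → g ∉ T * T⁻¹) := by
    intro g
    by_cases hg : g ≠ 1
    · obtain ⟨A, B, hA, hB, h1A, hgB, hAB⟩ := t2_separation (Ne.symm hg)
      refine ⟨(H : Set G) ∩ A ∩ (fun x => g * x) ⁻¹' B,
        (hHopen.inter hA).inter (hB.preimage (continuous_const.mul continuous_id)),
        ⟨⟨H.one_mem, h1A⟩, by simpa using hgB⟩, fun x hx => hx.1.1, ?_⟩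
      intro _ _ hmem
      rw [Set.mem_mul] at hmem
      obtain ⟨a, ha, b, hb, hab⟩ := hmem
      rw [Set.mem_inv] at hb
      have haB : a ∈ B := by
        have : g * b⁻¹ ∈ B := hb.2
        rwa [show g * b⁻¹ = a by rw [← hab]; group] at this
      exact hAB.le_bot ⟨ha.1.2, haB⟩
    · push_neg at hg
      exact ⟨(H : Set G), hHopen, H.one_mem, subset_rfl, fun _ h => absurd hg h⟩
  choose T hTopen hT1 hTsub hTsep using hsepT
  set Q : ℕ → Set G := fun n => T (e n) with hQdef
  -- shrinking
  have shrink : ∀ A : Set G, ∃ B : Set G, IsOpen B ∧ (1 : G) ∈ B ∧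
      (IsOpen A → (1 : G) ∈ A → B * B ⊆ A) := by
    intro A
    by_cases h : IsOpen A ∧ (1 : G) ∈ A
    · obtain ⟨V, hVo, hV1, hVV⟩ := exists_open_nhds_one_mul_subset (h.1.mem_nhds h.2)
      exact ⟨V, hVo, hV1, fun _ _ => hVV⟩
    · exact ⟨Set.univ, isOpen_univ, trivial, fun h1 h2 => absurd ⟨h1, h2⟩ h⟩
  choose f hfo hf1 hf using shrink
  set V : ℕ → Set G := fun n => Nat.rec (U ∩ Q 0) (fun n Vn => f (Vn ∩ Q (n + 1))) n with hVdef
  have hV0 : V 0 = U ∩ Q 0 := rfl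
  have hVs : ∀ n, V (n + 1) = f (V n ∩ Q (n + 1)) := fun n => rfl
  have hVo : ∀ n, IsOpen (V n) := by
    intro n
    cases n with
    | zero => exact hUo.inter (hTopen _)
    | succ n => rw [hVs]; exact hfo _
  have hV1 : ∀ n, (1 : G) ∈ V n := by
    intro n
    cases n with
    | zero => exact ⟨hU1, hT1 _⟩
    | succ n => rw [hVs]; exact hf1 _
  have hVmul : ∀ n, V (n + 1) * V (n + 1) ⊆ V n ∩ Q (n + 1) := by
    intro n
    rw [hVs]
    exact hf _ ((hVo n).inter (hTopen _)) ⟨hV1 n, hT1 _⟩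
  have hVQ : ∀ n, V n ⊆ Q n := by
    intro n
    cases n with
    | zero => exact Set.inter_subset_right
    | succ n =>
      intro x hx
      have := hVmul n (Set.mul_mem_mul hx (hV1 (n + 1)))
      rw [mul_one] at this
      exact this.2
  have hVstep : ∀ n, V (n + 1) ⊆ V n := by
    intro n x hx
    have := hVmul n (Set.mul_mem_mul hx (hV1 (n + 1)))
    rw [mul_one] at this
    exact this.1
  have hVH : ∀ n, V n ⊆ (H : Set G) := by
    intro n
    induction n with
    | zero => exact (hVQ 0).trans (hTsub _)
    | succ n ih => exact (hVstep n).trans ih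
  set W : ℕ → Set G := fun n => V n * (V n)⁻¹ with hWdef
  have h1inv : ∀ n, (1 : G) ∈ (V n)⁻¹ := fun n => by
    rw [Set.mem_inv, inv_one]; exact hV1 n
  have hW1 : ∀ n, (1 : G) ∈ W n := fun n => by
    have := Set.mul_mem_mul (hV1 n) (h1inv n)
    rwa [mul_one] at this
  have hVW : ∀ n, V n ⊆ W n := fun n x hx => by
    have := Set.mul_mem_mul hx (h1inv n)
    rwa [mul_one] at this
  have hWanti : ∀ n, W (n + 1) ⊆ W n := fun n =>
    Set.mul_subset_mul (hVstep n) (Set.inv_subset_inv.2 (hVstep n))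
  have hWle : Antitone W := antitone_nat_of_succ_le hWanti
  have hWmul : ∀ n, W (n + 1) * W (n + 1) ⊆ W n := by
    intro n
    have h1 : W (n + 1) * W (n + 1) =
        (V (n + 1) * V (n + 1)) * ((V (n + 1))⁻¹ * (V (n + 1))⁻¹) :=
      mul_mul_mul_comm _ _ _ _
    have h2 : (V (n + 1))⁻¹ * (V (n + 1))⁻¹ = (V (n + 1) * V (n + 1))⁻¹ :=
      (mul_inv_rev _ _).symm
    have h3 : V (n + 1) * V (n + 1) ⊆ V n := fun x hx => (hVmul n hx).1
    rw [h1, h2]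
    exact Set.mul_subset_mul h3 (Set.inv_subset_inv.2 h3)
  have hWsymm : ∀ n, ∀ x ∈ W n, x⁻¹ ∈ W n := by
    intro n x hx
    rw [Set.mem_mul] at hx
    obtain ⟨a, ha, b, hb, rfl⟩ := hx
    rw [Set.mem_inv] at hb
    have := Set.mul_mem_mul hb (Set.inv_mem_inv.2 ha)
    rwa [← mul_inv_rev] at this
  have hWsep : ∀ g : G, (∀ n, g ∈ W n) → g = 1 := by
    intro g hg
    have hgH : g ∈ (H : Set G) := by
      have h0 := hg 0
      rw [Set.mem_mul] at h0
      obtain ⟨a, ha, b, hb, rfl⟩ := h0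
      rw [Set.mem_inv] at hb
      exact H.mul_mem (hVH 0 ha) (H.inv_mem_iff.1 (hVH 0 hb))
    by_contra hne
    have : g ∈ Set.range e := by rw [← he]; exact hgH
    obtain ⟨m, rfl⟩ := this
    refine hTsep (e m) hgH hne ?_
    exact Set.mul_subset_mul (hVQ m) (Set.inv_subset_inv.2 (hVQ m)) (hg m)
  -- the group filter basis
  set B : GroupFilterBasis G := groupFilterBasisOfComm (Set.range W)
    ⟨W 0, Set.mem_range_self 0⟩
    (by
      rintro _ _ ⟨m, rfl⟩ ⟨n, rfl⟩
      exact ⟨W (max m n), Set.mem_range_self _,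
        Set.subset_inter (hWle (le_max_left m n)) (hWle (le_max_right m n))⟩)
    (by rintro _ ⟨n, rfl⟩; exact hW1 n)
    (by rintro _ ⟨n, rfl⟩; exact ⟨W (n + 1), Set.mem_range_self (n+1), hWmul n⟩)
    (by rintro _ ⟨n, rfl⟩; exact ⟨W n, Set.mem_range_self _, fun x hx => hWsymm n x hx⟩)
    with hBdef
  have hBmem : ∀ s : Set G, s ∈ B ↔ s ∈ Set.range W := fun s => Iff.rfl
  refine ⟨B.topology, ?_, ?_⟩
  · -- coarser
    apply le_of_nhds_le_nhds
    intro x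
    rw [(B.nhds_hasBasis x).ge_iff]
    intro Vb hVb
    obtain ⟨n, rfl⟩ := (hBmem Vb).1 hVb
    have hmem : (fun z => x⁻¹ * z) ⁻¹' (V n) ∈ 𝓝 x := by
      refine IsOpen.mem_nhds ((hVo n).preimage (continuous_const.mul continuous_id)) ?_
      simp [hV1 n]
    refine mem_of_superset hmem fun z hz => ?_
    exact ⟨x⁻¹ * z, hVW n hz, by group⟩
  · -- metrizable
    haveI := B.isTopologicalGroup
    refine @metrizable_aux G _ B.topology B.isTopologicalGroup W ?_ hWsep
    refine (B.nhds_one_hasBasis).to_hasBasis ?_ ?_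
    · intro Vb hVb
      obtain ⟨n, rfl⟩ := (hBmem Vb).1 hVb
      exact ⟨n, trivial, subset_rfl⟩
    · intro n _
      exact ⟨W n, (hBmem _).2 (Set.mem_range_self n), subset_rfl⟩
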